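/- arXiv:1703.10377 — 2 statements merged into one kernel-verified Lean document; each statement's English description precedes it below -/
import Mathlib

section
/- Let Q be a set of prime numbers having natural density c > 0 within the primes, i.e. #{p ∈ Q : p ≤ x} / #{p prime : p ≤ x} → c as x → ∞. Then there exists x₀ > 0 such that for all x ≥ x₀ one has Σ_{p ∈ Q, p ≤ x} (log p)/p ≥ (c/2)·log x. -/
open Filter Real
open Finset ArithmeticFunction

noncomputable def ff (n : ℕ) : ℝ := Real.log n / n

lemma ff_nonneg (n : ℕ) : 0 ≤ ff n := by
  unfold ff
  rcases Nat.eq_zero_or_pos n with h | h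
  · simp [h]
  · exact div_nonneg (Real.log_natCast_nonneg n) (by positivity)

lemma abel_sum (a f : ℕ → ℝ) : ∀ N : ℕ,
    ∑ n ∈ range (N+1), a n * f n
      = (∑ k ∈ range (N+1), a k) * f N
        + ∑ n ∈ range N, (∑ k ∈ range (n+1), a k) * (f n - f (n+1))
  | 0 => by simp
  | (N+1) => by
      rw [sum_range_succ (fun n => a n * f n), abel_sum a f N,
          sum_range_succ (fun n => (∑ k ∈ range (n+1), a k) * (f n - f (n+1))),
          sum_range_succ a (N+1), sum_range_succ a N]
      ring

lemma log_succ_le (N : ℕ) (hN : 1 ≤ N) : Real.log (N+1) ≤ Real.log N + 1/N := by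
  have h0 : (0:ℝ) < N := by exact_mod_cast hN
  have : Real.log ((N+1)/N) ≤ (N+1)/N - 1 :=
    Real.log_le_sub_one_of_pos (by positivity)
  rw [Real.log_div (by positivity) (by positivity)] at this
  have h2 : ((N:ℝ)+1)/N - 1 = 1/N := by field_simp; ring
  linarith [this, h2 ▸ this]

lemma log_fact_lower : ∀ N : ℕ, (N:ℝ) * Real.log N - N ≤ ∑ n ∈ range (N+1), Real.log n
  | 0 => by simp
  | (N+1) => by
      rw [sum_range_succ]
      have ih := log_fact_lower N
      rcases Nat.eq_zero_or_pos N with h | h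
      · subst h; simp
      · have h1 : Real.log (N+1) ≤ Real.log N + 1/N := log_succ_le N h
        have h0 : (0:ℝ) < N := by exact_mod_cast h
        have : (N:ℝ) * Real.log (N+1) ≤ (N:ℝ) * Real.log N + 1 := by
          calc (N:ℝ) * Real.log (N+1) ≤ (N:ℝ) * (Real.log N + 1/N) := by
                exact mul_le_mul_of_nonneg_left h1 (le_of_lt h0)
            _ = (N:ℝ) * Real.log N + 1 := by
                rw [mul_add, mul_one_div, div_self (ne_of_gt h0)]
        push_cast
        nlinarith [this, ih]

lemma swap_lemma (N : ℕ) :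
    ∑ n ∈ range (N+1), Real.log n
      = ∑ d ∈ range (N+1), Λ d * ((N / d : ℕ) : ℝ) := by
  have h1 : ∀ n ∈ range (N+1),
      Real.log n = ∑ d ∈ range (N+1), if d ∈ n.divisors then Λ d else 0 := by
    intro n hn
    rw [Finset.sum_ite_mem, ← ArithmeticFunction.vonMangoldt_sum (n := n)]
    congr 1
    symm
    apply Finset.inter_eq_right.2
    intro d hd
    rw [mem_range, Nat.lt_succ_iff]
    exact le_trans (Nat.divisor_le hd) (Nat.lt_succ_iff.1 (mem_range.1 hn))
  rw [Finset.sum_congr rfl h1, Finset.sum_comm]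
  apply Finset.sum_congr rfl
  intro d _
  rw [← Finset.sum_filter, Finset.sum_const, nsmul_eq_mul, mul_comm]
  congr 2
  rw [← Nat.Ioc_filter_dvd_card_eq_div N d]
  congr 1
  ext n
  simp only [mem_filter, mem_range, Nat.lt_succ_iff, Nat.mem_divisors, mem_Ioc,
    Nat.pos_iff_ne_zero]
  tauto

lemma log_le_two_sqrt {n : ℕ} (h : 1 ≤ n) : Real.log n ≤ 2 * Real.sqrt n := by
  have h0 : (0:ℝ) < n := by exact_mod_cast h
  have hs : 0 < Real.sqrt n := Real.sqrt_pos.2 h0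
  have h1 : Real.log n = 2 * Real.log (Real.sqrt n) := by
    rw [Real.log_sqrt h0.le]; ring
  have h2 : Real.log (Real.sqrt n) ≤ Real.sqrt n - 1 :=
    Real.log_le_sub_one_of_pos hs
  linarith

lemma sqrt_telescope (N : ℕ) (h : 1 ≤ N) :
    4 / (((N:ℝ)+1) * Real.sqrt (N+1)) ≤ 8 / Real.sqrt N - 8 / Real.sqrt (N+1) := by
  have h0 : (0:ℝ) < N := by exact_mod_cast h
  set a := Real.sqrt N with ha'
  set b := Real.sqrt ((N:ℝ)+1) with hb'
  have ha : 0 < a := Real.sqrt_pos.2 h0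
  have hb : 0 < b := Real.sqrt_pos.2 (by linarith)
  have hab : a ≤ b := Real.sqrt_le_sqrt (by linarith)
  have h2 : a^2 = N := Real.sq_sqrt h0.le
  have h3 : b^2 = (N:ℝ)+1 := Real.sq_sqrt (by linarith)
  have e1 : 8 / a - 8 / b = 8 * (b - a) / (a * b) := by field_simp
  have e2 : b - a = 1 / (a + b) := by
    rw [eq_div_iff (by positivity)]; nlinarith
  rw [e1, e2]
  have e3 : 8 * (1 / (a + b)) / (a * b) = 8 / ((a + b) * (a * b)) := by
    field_simp
  rw [e3, div_le_div_iff₀ (by positivity) (by positivity)]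
  nlinarith [sq_nonneg (b - a), sq_nonneg a, sq_nonneg b]

lemma pw_sum_le (N : ℕ) :
    ∑ m ∈ range (N+1), (if 2 ≤ m then 2 * Real.log m / (m:ℝ)^2 else 0) ≤ 8 := by
  have key : ∀ M : ℕ, 1 ≤ M →
      ∑ m ∈ range (M+1), (if 2 ≤ m then 2 * Real.log m / (m:ℝ)^2 else 0)
        ≤ 8 - 8 / Real.sqrt M := by
    intro M hM
    induction M, hM using Nat.le_induction with
    | base => simp [Finset.sum_range_succ]
    | succ M hM ih =>
      rw [sum_range_succ]
      push_cast
      have h0 : (0:ℝ) < M := by exact_mod_cast hM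
      have hs : 0 < Real.sqrt ((M:ℝ)+1) := Real.sqrt_pos.2 (by linarith)
      have ht : (if 1 ≤ M then 2 * Real.log ((M:ℝ)+1) / ((M:ℝ)+1)^2 else 0)
          ≤ 4 / (((M:ℝ)+1) * Real.sqrt ((M:ℝ)+1)) := by
        rw [if_pos (by omega)]
        push_cast
        have hl : Real.log ((M:ℝ)+1) ≤ 2 * Real.sqrt ((M:ℝ)+1) := by
          have := log_le_two_sqrt (n := M+1) (by omega)
          push_cast at this
          exact this
        rw [div_le_div_iff₀ (by positivity) (by positivity)]
        have hsq : Real.sqrt ((M:ℝ)+1) ^ 2 = (M:ℝ)+1 := Real.sq_sqrt (by linarith)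
        nlinarith [mul_le_mul_of_nonneg_right hl
          (by positivity : (0:ℝ) ≤ ((M:ℝ)+1) * Real.sqrt ((M:ℝ)+1)), hsq]
      have htel := sqrt_telescope M hM
      push_cast at htel
      calc _ ≤ (8 - 8 / Real.sqrt M) + 4 / (((M:ℝ)+1) * Real.sqrt ((M:ℝ)+1)) := by
              gcongr
        _ ≤ 8 - 8 / Real.sqrt ((M:ℝ)+1) := by linarith
  rcases Nat.eq_zero_or_pos N with h | h
  · subst h; norm_num
  · have := key N h
    have : 0 ≤ 8 / Real.sqrt N := by positivity
    linarith [key N h]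

lemma inner_geom {p : ℕ} (hp : p.Prime) (M : ℕ) :
    ∑ k ∈ Ico 2 M, Real.log p / (p:ℝ)^k ≤ 2 * Real.log p / (p:ℝ)^2 := by
  have hp2 : (2:ℝ) ≤ p := by exact_mod_cast hp.two_le
  have hp0 : (0:ℝ) < p := by linarith
  have hlog : 0 ≤ Real.log p := Real.log_natCast_nonneg p
  have key : ∑ k ∈ Ico 2 M, (1/(p:ℝ))^k ≤ 2 / (p:ℝ)^2 := by
    rcases le_or_gt M 2 with h | h
    · rw [Finset.Ico_eq_empty (by omega)]
      simp
      positivity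
    · rw [Finset.sum_Ico_eq_sum_range]
      have : ∀ j ∈ range (M - 2), (1/(p:ℝ))^(2+j) = (1/(p:ℝ))^2 * (1/(p:ℝ))^j := by
        intro j _; rw [pow_add]
      rw [Finset.sum_congr rfl this, ← Finset.mul_sum]
      have h1 : ∑ j ∈ range (M-2), (1/(p:ℝ))^j ≤ ∑ j ∈ range (M-2), (1/(2:ℝ))^j := by
        apply Finset.sum_le_sum
        intro j _
        apply pow_le_pow_left₀ (by positivity)
        rw [div_le_div_iff₀ hp0 (by norm_num)]
        linarith
      have h2 := sum_geometric_two_le (M-2)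
      have h3 : (1/(p:ℝ))^2 = 1/(p:ℝ)^2 := by rw [div_pow]; norm_num
      rw [h3]
      calc 1/(p:ℝ)^2 * ∑ j ∈ range (M-2), (1/(p:ℝ))^j
          ≤ 1/(p:ℝ)^2 * 2 := by
            apply mul_le_mul_of_nonneg_left (le_trans h1 h2) (by positivity)
        _ = 2 / (p:ℝ)^2 := by ring
  have : ∑ k ∈ Ico 2 M, Real.log p / (p:ℝ)^k
      = Real.log p * ∑ k ∈ Ico 2 M, (1/(p:ℝ))^k := by
    rw [Finset.mul_sum]
    apply Finset.sum_congr rfl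
    intro k _
    rw [div_pow, one_pow]
    ring
  rw [this]
  calc Real.log p * ∑ k ∈ Ico 2 M, (1/(p:ℝ))^k
      ≤ Real.log p * (2 / (p:ℝ)^2) := mul_le_mul_of_nonneg_left key hlog
    _ = 2 * Real.log p / (p:ℝ)^2 := by ring

lemma lambda_split (N : ℕ) :
    ∑ d ∈ range (N+1), Λ d / (d:ℝ)
      ≤ (∑ d ∈ range (N+1), if d.Prime then Real.log d / (d:ℝ) else 0) + 8 := by
  have point : ∀ d : ℕ, Λ d / (d:ℝ)
      = (if d.Prime then Real.log d / (d:ℝ) else 0)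
        + (if IsPrimePow d ∧ ¬ d.Prime then Λ d / (d:ℝ) else 0) := by
    intro d
    by_cases hd : d.Prime
    · rw [if_pos hd, if_neg (by tauto), vonMangoldt_apply_prime hd, add_zero]
    · rw [if_neg hd]
      by_cases hpp : IsPrimePow d
      · rw [if_pos ⟨hpp, hd⟩, zero_add]
      · rw [if_neg (by tauto), vonMangoldt_eq_zero_iff.2 hpp]
        simp
  rw [Finset.sum_congr rfl (fun d _ => point d), Finset.sum_add_distrib]
  gcongr
  -- remainder sum ≤ 8
  rw [← Finset.sum_filter]
  set S := (range (N+1)).filter (fun d => IsPrimePow d ∧ ¬ d.Prime) with hS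
  set U := ((range (N+1)).filter Nat.Prime) ×ˢ (Ico 2 (N+1)) with hU
  set e : ℕ × ℕ → ℕ := fun pk => pk.1 ^ pk.2 with he
  have hsub : S ⊆ Finset.image e U := by
    intro d hd
    rw [hS, mem_filter, mem_range, Nat.lt_succ_iff] at hd
    obtain ⟨hdN, ⟨p, k, hp, hk, hpk⟩, hnp⟩ := hd
    have hp' : p.Prime := hp.nat_prime
    have hk2 : 2 ≤ k := by
      by_contra h
      have hk1 : k = 1 := by omega
      rw [hk1, pow_one] at hpk
      exact hnp (hpk ▸ hp')
    have hpd : p ≤ N := by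
      have : p ≤ p ^ k := Nat.le_self_pow (by omega) p
      omega
    have hkd : k ≤ N := by
      have h1 : k < 2 ^ k := Nat.lt_two_pow_self
      have h2 : 2 ^ k ≤ p ^ k := Nat.pow_le_pow_left hp'.two_le k
      omega
    rw [Finset.mem_image]
    exact ⟨(p, k), by
      rw [hU, Finset.mem_product, mem_filter, mem_range, Finset.mem_Ico]
      exact ⟨⟨Nat.lt_succ_of_le hpd, hp'⟩, hk2, Nat.lt_succ_of_le hkd⟩, hpk⟩
  have hinj : Set.InjOn e U := by
    intro x hx y hy hxy
    rw [Finset.mem_coe, hU, Finset.mem_product, mem_filter, Finset.mem_Ico] at hx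
    rw [Finset.mem_coe, hU, Finset.mem_product, mem_filter, Finset.mem_Ico] at hy
    obtain ⟨⟨_, hp⟩, hk, _⟩ := hx
    obtain ⟨⟨_, hq⟩, hj, _⟩ := hy
    simp only [he] at hxy
    have hpq' : x.1 = y.1 := by
      have h1 : x.1 ∣ y.1 ^ y.2 := hxy ▸ dvd_pow_self x.1 (by omega : x.2 ≠ 0)
      have h2 : x.1 ∣ y.1 := hp.dvd_of_dvd_pow h1
      exact ((Nat.prime_dvd_prime_iff_eq hp hq).1 h2)
    have hkj : x.2 = y.2 := by
      rw [hpq'] at hxy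
      exact Nat.pow_right_injective hq.two_le hxy
    exact Prod.ext hpq' hkj
  calc ∑ d ∈ S, Λ d / (d:ℝ)
      ≤ ∑ d ∈ Finset.image e U, Λ d / (d:ℝ) := by
        apply Finset.sum_le_sum_of_subset_of_nonneg hsub
        intro d _ _
        exact div_nonneg vonMangoldt_nonneg (Nat.cast_nonneg d)
    _ = ∑ pk ∈ U, Λ (e pk) / ((e pk : ℕ):ℝ) := by
        rw [Finset.sum_image (fun x hx y hy h => hinj hx hy h)]
    _ = ∑ p ∈ (range (N+1)).filter Nat.Prime, ∑ k ∈ Ico 2 (N+1),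
          Real.log p / (p:ℝ)^k := by
        rw [hU, Finset.sum_product]
        apply Finset.sum_congr rfl
        intro p hp
        apply Finset.sum_congr rfl
        intro k hk
        have hp' : p.Prime := (mem_filter.1 hp).2
        have hk' : k ≠ 0 := by
          have := (Finset.mem_Ico.1 hk).1; omega
        rw [he]
        simp only
        rw [vonMangoldt_apply_pow hk', vonMangoldt_apply_prime hp']
        push_cast
        ring_nf
    _ ≤ ∑ p ∈ (range (N+1)).filter Nat.Prime, 2 * Real.log p / (p:ℝ)^2 := by
        apply Finset.sum_le_sum
        intro p hp
        exact inner_geom (mem_filter.1 hp).2 (N+1)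
    _ ≤ ∑ m ∈ range (N+1), (if 2 ≤ m then 2 * Real.log m / (m:ℝ)^2 else 0) := by
        rw [Finset.sum_filter]
        apply Finset.sum_le_sum
        intro m _
        by_cases hm : m.Prime
        · rw [if_pos hm, if_pos hm.two_le]
        · rw [if_neg hm]
          split <;> positivity
    _ ≤ 8 := pw_sum_le N

lemma mertens_lower (N : ℕ) (hN : 1 ≤ N) :
    Real.log N - 9 ≤ ∑ d ∈ range (N+1), (if d.Prime then Real.log d / (d:ℝ) else 0) := by
  have h0 : (0:ℝ) < N := by exact_mod_cast hN
  have h1 := log_fact_lower N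
  rw [swap_lemma] at h1
  have h2 : ∑ d ∈ range (N+1), Λ d * ((N/d:ℕ):ℝ)
      ≤ (N:ℝ) * ∑ d ∈ range (N+1), Λ d / (d:ℝ) := by
    rw [Finset.mul_sum]
    apply Finset.sum_le_sum
    intro d _
    calc Λ d * ((N/d:ℕ):ℝ) ≤ Λ d * ((N:ℝ)/(d:ℝ)) :=
          mul_le_mul_of_nonneg_left (Nat.cast_div_le) vonMangoldt_nonneg
      _ = (N:ℝ) * (Λ d / d) := by ring
  have h3 : Real.log N - 1 ≤ ∑ d ∈ range (N+1), Λ d / (d:ℝ) := by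
    have h4 : (N:ℝ) * (Real.log N - 1) ≤ (N:ℝ) * ∑ d ∈ range (N+1), Λ d / (d:ℝ) := by
      nlinarith [h1, h2]
    exact le_of_mul_le_mul_left h4 h0
  linarith [lambda_split N]

lemma theta_bound (N : ℕ) :
    ∑ p ∈ (range (N+1)).filter Nat.Prime, Real.log p ≤ (N:ℝ) * Real.log 4 := by
  have h1 : ((primorial N : ℕ):ℝ) = ∏ p ∈ (range (N+1)).filter Nat.Prime, (p:ℝ) := by
    rw [primorial]; push_cast; rfl
  have h2 : ∑ p ∈ (range (N+1)).filter Nat.Prime, Real.log p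
      = Real.log ((primorial N : ℕ):ℝ) := by
    rw [h1, Real.log_prod]
    intro p hp
    have := (mem_filter.1 hp).2.pos
    positivity
  rw [h2]
  calc Real.log ((primorial N : ℕ):ℝ) ≤ Real.log (((4^N : ℕ):ℝ)) := by
        apply Real.log_le_log (by exact_mod_cast primorial_pos N)
        exact_mod_cast primorial_le_4_pow N
    _ = (N:ℝ) * Real.log 4 := by
        rw [Nat.cast_pow, Real.log_pow]
        norm_num

lemma pi_bound (N : ℕ) (hN : 1 ≤ N) :
    (((range (N+1)).filter Nat.Prime).card : ℝ) * (Real.log N / N) ≤ 7 := by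
  have h0 : (0:ℝ) < N := by exact_mod_cast hN
  set P := (range (N+1)).filter Nat.Prime with hP
  set P1 := P.filter (fun p => p*p ≤ N) with hP1
  set P2 := P.filter (fun p => ¬ p*p ≤ N) with hP2
  have hcard : P1.card + P2.card = P.card := Finset.card_filter_add_card_filter_not _
  have hc1 : (P1.card : ℝ) ≤ Real.sqrt N + 1 := by
    have hsub : P1 ⊆ range (Nat.sqrt N + 1) := by
      intro p hp
      rw [mem_range, Nat.lt_succ_iff]
      exact Nat.le_sqrt.2 (mem_filter.1 hp).2
    have := Finset.card_le_card hsub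
    rw [Finset.card_range] at this
    have hns : (Nat.sqrt N : ℝ) ≤ Real.sqrt N := by
      apply Real.le_sqrt_of_sq_le
      have h' : ((N.sqrt ^ 2 : ℕ) : ℝ) ≤ (N:ℝ) := Nat.cast_le.2 (Nat.sqrt_le' N)
      push_cast at h'
      nlinarith [h']
    calc (P1.card : ℝ) ≤ (Nat.sqrt N + 1 : ℕ) := by exact_mod_cast this
      _ ≤ Real.sqrt N + 1 := by push_cast; linarith
  have hc2 : (P2.card : ℝ) * Real.log N ≤ 2 * (N:ℝ) * Real.log 4 := by
    have hsum : (P2.card : ℝ) * (Real.log N / 2) ≤ ∑ p ∈ P2, Real.log p := by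
      have := Finset.card_nsmul_le_sum P2 (fun p => Real.log p) (Real.log N / 2) ?_
      · rw [nsmul_eq_mul] at this; exact this
      · intro p hp
        rw [hP2, mem_filter] at hp
        have hpp : N < p * p := by omega
        have hp0 : (0:ℝ) < p := by
          have := (mem_filter.1 hp.1).2.pos; exact_mod_cast this
        have : Real.log N ≤ Real.log ((p:ℝ) * p) := by
          apply Real.log_le_log h0
          have : (N:ℝ) < (p:ℝ) * p := by exact_mod_cast hpp
          linarith
        rw [Real.log_mul hp0.ne' hp0.ne'] at this
        linarith
    have hsub : ∑ p ∈ P2, Real.log p ≤ ∑ p ∈ P, Real.log p := by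
      apply Finset.sum_le_sum_of_subset_of_nonneg (Finset.filter_subset _ _)
      intro p hp _
      exact Real.log_natCast_nonneg p
    have := theta_bound N
    rw [← hP] at this
    nlinarith [hsum, hsub, this]
  have hlogN : 0 ≤ Real.log N := Real.log_natCast_nonneg N
  have hlog4 : Real.log 4 ≤ 1.4 := by
    have h2 : Real.log 4 = 2 * Real.log 2 := by
      rw [show (4:ℝ) = 2^2 by norm_num, Real.log_pow]; push_cast; ring
    have := Real.log_two_lt_d9
    rw [h2]; linarith
  have hlt : Real.log N ≤ 2 * Real.sqrt N := log_le_two_sqrt hN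
  have hs0 : (1:ℝ) ≤ Real.sqrt N := by
    rw [show (1:ℝ) = Real.sqrt 1 by simp]
    apply Real.sqrt_le_sqrt
    exact_mod_cast hN
  have hsq : Real.sqrt N ^ 2 = (N:ℝ) := Real.sq_sqrt h0.le
  have hcP : (P.card : ℝ) = (P1.card : ℝ) + (P2.card : ℝ) := by
    exact_mod_cast hcard.symm
  rw [hcP]
  have key : ((P1.card : ℝ) + P2.card) * Real.log N ≤ 7 * N := by
    have t1 : (P1.card : ℝ) * Real.log N ≤ (Real.sqrt N + 1) * (2 * Real.sqrt N) := by
      apply mul_le_mul hc1 hlt hlogN (by positivity)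
    nlinarith [hc2, t1, hsq, hs0, sq_nonneg (Real.sqrt N - 1)]
  calc ((P1.card:ℝ) + P2.card) * (Real.log N / N) = ((P1.card:ℝ) + P2.card) * Real.log N / N := by ring
    _ ≤ 7 := by
      rw [div_le_iff₀ h0]
      linarith [key]

lemma ff_anti {n : ℕ} (hn : 3 ≤ n) : ff (n+1) ≤ ff n := by
  unfold ff
  have h0 : (0:ℝ) < n := by exact_mod_cast (by omega : 0 < n)
  have h1 : (0:ℝ) < (n:ℝ) + 1 := by linarith
  have hlog1 : 1 ≤ Real.log n := by
    rw [Real.le_log_iff_exp_le h0]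
    calc Real.exp 1 ≤ 2.7182818286 := (Real.exp_one_lt_d9).le
      _ ≤ 3 := by norm_num
      _ ≤ (n:ℝ) := by exact_mod_cast hn
  have h2 : Real.log ((n:ℝ)+1) ≤ Real.log n + 1/n := by
    have := log_succ_le n (by omega)
    exact this
  have h3 : ((n+1:ℕ):ℝ) = (n:ℝ)+1 := by push_cast; ring
  rw [h3, div_le_div_iff₀ h1 h0]
  have h4 : (n:ℝ) * Real.log ((n:ℝ)+1) ≤ (n:ℝ) * Real.log n + 1 := by
    calc (n:ℝ) * Real.log ((n:ℝ)+1) ≤ (n:ℝ) * (Real.log n + 1/n) :=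
          mul_le_mul_of_nonneg_left h2 h0.le
      _ = (n:ℝ) * Real.log n + 1 := by
          rw [mul_add, mul_one_div, div_self (ne_of_gt h0)]
  nlinarith [hlog1]

/-- If a set `Q` of primes has natural density `c > 0` within the primes,
then there exists `x₀ > 0` such that for all `x ≥ x₀` one has
`∑_{p ∈ Q, p ≤ x} (log p)/p ≥ (c/2)·log x`. -/
theorem stmt_1 (Q : Set ℕ) (hQ : ∀ p ∈ Q, p.Prime) (c : ℝ) (hc : 0 < c)
    (hdens : Tendsto (fun x : ℝ =>
        (({p | p ∈ Q ∧ (p : ℝ) ≤ x}.ncard : ℝ) /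
          ({p : ℕ | p.Prime ∧ (p : ℝ) ≤ x}.ncard : ℝ)))
      atTop (nhds c)) :
    ∃ x₀ : ℝ, 0 < x₀ ∧ ∀ x ≥ x₀,
      (c / 2) * Real.log x ≤
        ∑ᶠ p ∈ {p : ℕ | p ∈ Q ∧ (p : ℝ) ≤ x}, Real.log p / p := by
  classical
  set aQ : ℕ → ℝ := fun n => if n ∈ Q then 1 else 0 with haQ
  set pa : ℕ → ℝ := fun n => if n.Prime then 1 else 0 with hpa
  set A : ℕ → ℝ := fun n => ∑ k ∈ range (n+1), aQ k with hA'
  set P : ℕ → ℝ := fun n => ∑ k ∈ range (n+1), pa k with hP'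
  -- set/Finset bridges
  have hsetQ : ∀ x : ℝ, 0 ≤ x →
      {p : ℕ | p ∈ Q ∧ (p : ℝ) ≤ x} = ↑((range (⌊x⌋₊+1)).filter (fun p => p ∈ Q)) := by
    intro x hx
    ext p
    simp only [Set.mem_setOf_eq, Finset.coe_filter, Set.mem_setOf_eq, mem_range,
      Nat.lt_succ_iff]
    rw [Nat.le_floor_iff hx]
    tauto
  have hsetP : ∀ x : ℝ, 0 ≤ x →
      {p : ℕ | p.Prime ∧ (p : ℝ) ≤ x} = ↑((range (⌊x⌋₊+1)).filter Nat.Prime) := by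
    intro x hx
    ext p
    simp only [Set.mem_setOf_eq, Finset.coe_filter, Set.mem_setOf_eq, mem_range,
      Nat.lt_succ_iff]
    rw [Nat.le_floor_iff hx]
    tauto
  have hAcard : ∀ n : ℕ, A n = (((range (n+1)).filter (fun p => p ∈ Q)).card : ℝ) := by
    intro n
    rw [hA', ← Finset.sum_boole]
  have hPcard : ∀ n : ℕ, P n = (((range (n+1)).filter Nat.Prime).card : ℝ) := by
    intro n
    rw [hP', ← Finset.sum_boole]
  have hAncard : ∀ n : ℕ, A n = ({p : ℕ | p ∈ Q ∧ (p : ℝ) ≤ (n:ℝ)}.ncard : ℝ) := by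
    intro n
    rw [hsetQ (n:ℝ) (Nat.cast_nonneg n), Set.ncard_coe_finset, hAcard n,
      Nat.floor_natCast]
  have hPncard : ∀ n : ℕ, P n = ({p : ℕ | p.Prime ∧ (p : ℝ) ≤ (n:ℝ)}.ncard : ℝ) := by
    intro n
    rw [hsetP (n:ℝ) (Nat.cast_nonneg n), Set.ncard_coe_finset, hPcard n,
      Nat.floor_natCast]
  -- density threshold
  have hev : ∀ᶠ x in atTop, 3*c/4 <
      (({p | p ∈ Q ∧ (p : ℝ) ≤ x}.ncard : ℝ) /
        ({p : ℕ | p.Prime ∧ (p : ℝ) ≤ x}.ncard : ℝ)) :=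
    hdens.eventually (eventually_gt_nhds (by linarith))
  obtain ⟨x₁, hx₁⟩ := eventually_atTop.1 hev
  set T : ℕ := max 4 ⌈x₁⌉₊ with hT
  have hT4 : 4 ≤ T := le_max_left _ _
  have hdensity : ∀ n : ℕ, T ≤ n → (3*c/4) * P n ≤ A n := by
    intro n hn
    have hxn : x₁ ≤ (n:ℝ) := by
      calc x₁ ≤ (⌈x₁⌉₊ : ℝ) := Nat.le_ceil x₁
        _ ≤ (T : ℝ) := by exact_mod_cast le_max_right 4 ⌈x₁⌉₊
        _ ≤ (n : ℝ) := by exact_mod_cast hn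
    have hr := hx₁ (n:ℝ) hxn
    rw [← hAncard n, ← hPncard n] at hr
    have hP0 : 0 < P n := by
      rw [hPcard n]
      have h2 : 2 ∈ (range (n+1)).filter Nat.Prime := by
        rw [mem_filter, mem_range]
        exact ⟨by omega, Nat.prime_two⟩
      have := Finset.card_pos.2 ⟨2, h2⟩
      exact_mod_cast this
    rw [lt_div_iff₀ hP0] at hr
    linarith
  -- the key lower bound for natural N
  set CQT : ℝ := ∑ n ∈ range T, A n * (ff n - ff (n+1)) with hCQT
  set CPT : ℝ := ∑ n ∈ range T, P n * (ff n - ff (n+1)) with hCPT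
  set D : ℝ := (3*c/4) * (16 + CPT) - CQT with hD
  have key : ∀ N : ℕ, T ≤ N →
      (3*c/4) * Real.log N - D ≤ ∑ n ∈ range (N+1), aQ n * ff n := by
    intro N hN
    have hN1 : 1 ≤ N := by omega
    have habelQ := abel_sum aQ ff N
    have habelP := abel_sum pa ff N
    have hsplitQ : ∑ n ∈ range N, A n * (ff n - ff (n+1))
        = CQT + ∑ n ∈ Ico T N, A n * (ff n - ff (n+1)) := by
      rw [hCQT, Finset.sum_range_add_sum_Ico _ hN]
    have hsplitP : ∑ n ∈ range N, P n * (ff n - ff (n+1))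
        = CPT + ∑ n ∈ Ico T N, P n * (ff n - ff (n+1)) := by
      rw [hCPT, Finset.sum_range_add_sum_Ico _ hN]
    have hterm : ∀ n ∈ Ico T N, (3*c/4) * (P n * (ff n - ff (n+1)))
        ≤ A n * (ff n - ff (n+1)) := by
      intro n hn
      have hn' : T ≤ n := (Finset.mem_Ico.1 hn).1
      have hd : 0 ≤ ff n - ff (n+1) := by
        have := ff_anti (n := n) (by omega)
        linarith
      calc (3*c/4) * (P n * (ff n - ff (n+1)))
          = ((3*c/4) * P n) * (ff n - ff (n+1)) := by ring
        _ ≤ A n * (ff n - ff (n+1)) :=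
            mul_le_mul_of_nonneg_right (hdensity n hn') hd
    have hsum_ge : (3*c/4) * ∑ n ∈ Ico T N, P n * (ff n - ff (n+1))
        ≤ ∑ n ∈ Ico T N, A n * (ff n - ff (n+1)) := by
      rw [Finset.mul_sum]
      exact Finset.sum_le_sum hterm
    -- Mertens lower for SP
    have hSP : Real.log N - 9 ≤ ∑ n ∈ range (N+1), pa n * ff n := by
      have := mertens_lower N hN1
      calc Real.log N - 9 ≤ ∑ d ∈ range (N+1), (if d.Prime then Real.log d / (d:ℝ) else 0) :=
            this
        _ = ∑ n ∈ range (N+1), pa n * ff n := by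
            apply Finset.sum_congr rfl
            intro d _
            rw [hpa]
            by_cases hd : d.Prime
            · rw [if_pos hd]; simp only [if_pos hd, ff]; ring
            · rw [if_neg hd]; simp only [if_neg hd, ff]; ring
    -- pi bound at N
    have hPN : P N * ff N ≤ 7 := by
      rw [hPcard N]
      have := pi_bound N hN1
      unfold ff
      exact this
    have hAnn : ∀ n, 0 ≤ A n := by
      intro n
      apply Finset.sum_nonneg
      intro k _
      rw [haQ]
      dsimp only
      split <;> norm_num
    have hANf : 0 ≤ A N * ff N := mul_nonneg (hAnn N) (ff_nonneg N)
    have hA0 : (∑ k ∈ range (N+1), aQ k) = A N := rfl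
    have hP0 : (∑ k ∈ range (N+1), pa k) = P N := rfl
    rw [hA0] at habelQ
    rw [hP0] at habelP
    have hIco : Real.log N - 16 - CPT ≤ ∑ n ∈ Ico T N, P n * (ff n - ff (n+1)) := by
      have e1 : ∑ n ∈ Ico T N, P n * (ff n - ff (n+1))
          = (∑ n ∈ range (N+1), pa n * ff n) - P N * ff N - CPT := by
        rw [habelP, hsplitP]; ring
      rw [e1]
      linarith [hSP, hPN]
    have hmul := mul_le_mul_of_nonneg_left hIco (by linarith : (0:ℝ) ≤ 3*c/4)
    have hQsum : CQT + ∑ n ∈ Ico T N, A n * (ff n - ff (n+1))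
        ≤ ∑ n ∈ range (N+1), aQ n * ff n := by
      rw [habelQ, ← hsplitQ]
      linarith [hANf]
    rw [hD]
    linarith [hmul, hsum_ge, hQsum]
  -- final assembly
  refine ⟨max ((T:ℝ) + 1) (Real.exp ((4*D + 2*c)/c) + 1), ?_, ?_⟩
  · apply lt_of_lt_of_le _ (le_max_left _ _)
    positivity
  · intro x hx
    have hxT : (T:ℝ) + 1 ≤ x := le_trans (le_max_left _ _) hx
    have hxE : Real.exp ((4*D + 2*c)/c) + 1 ≤ x := le_trans (le_max_right _ _) hx
    have hT4' : (4:ℝ) ≤ (T:ℝ) := by exact_mod_cast hT4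
    have hx0 : 0 < x := by linarith
    set N := ⌊x⌋₊ with hNdef
    have hTN : T ≤ N := Nat.le_floor (by linarith)
    have hN1 : 1 ≤ N := by omega
    have hN0 : (0:ℝ) < N := by exact_mod_cast hN1
    have hsum : ∑ᶠ p ∈ {p : ℕ | p ∈ Q ∧ (p : ℝ) ≤ x}, (Real.log p / p)
        = ∑ n ∈ range (N+1), aQ n * ff n := by
      rw [hsetQ x hx0.le, finsum_mem_coe_finset, Finset.sum_filter]
      apply Finset.sum_congr rfl
      intro n _
      rw [haQ]
      unfold ff
      by_cases hn : n ∈ Q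
      · simp [hn]
      · simp [hn]
    rw [hsum]
    have hkey := key N hTN
    have hxN1 : x ≤ (N:ℝ) + 1 := (Nat.lt_floor_add_one x).le
    have hlogx : Real.log x ≤ Real.log N + 1 := by
      have h1 : Real.log x ≤ Real.log ((N:ℝ)+1) := Real.log_le_log hx0 hxN1
      have h2 := log_succ_le N hN1
      have h3 : 1/(N:ℝ) ≤ 1 := by
        rw [div_le_one hN0]
        exact_mod_cast hN1
      linarith
    have hlogN : (4*D + 2*c)/c ≤ Real.log N := by
      have h1 : Real.exp ((4*D + 2*c)/c) ≤ (N:ℝ) := by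
        have h2 := Nat.sub_one_lt_floor x
        rw [← hNdef] at h2
        linarith
      calc (4*D+2*c)/c = Real.log (Real.exp ((4*D+2*c)/c)) := (Real.log_exp _).symm
        _ ≤ Real.log N := Real.log_le_log (Real.exp_pos _) h1
    have hE : c * ((4*D+2*c)/c) = 4*D + 2*c := mul_div_cancel₀ _ (ne_of_gt hc)
    have hclog : 4*D + 2*c ≤ c * Real.log N := by
      have := mul_le_mul_of_nonneg_left hlogN hc.le
      rwa [hE] at this
    have hl2 : c * Real.log x ≤ c * (Real.log N + 1) :=
      mul_le_mul_of_nonneg_left hlogx hc.le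
    nlinarith [hkey, hclog, hl2, hc]
end

section
/- Let (a_n)_{n ≥ 1} and (b_n)_{n ≥ 1} be sequences of nonnegative real numbers with a_n ≤ b_n for all n. Suppose that Σ_{n ≤ x} b_n is asymptotically equivalent to x/log x as x → ∞, and that the ratio (Σ_{n ≤ x} a_n) / (Σ_{n ≤ x} b_n) converges to a constant c > 0 as x → ∞. Then Σ_{n ≤ x} a_n·(log n)/n is asymptotically equivalent to c·(log x − log log x) as x → ∞. -/
open Filter Real MeasureTheory

lemma hasDerivAt_logdiv {t : ℝ} (ht : 0 < t) :
    HasDerivAt (fun u : ℝ => Real.log u / u) ((1 - Real.log t) / t ^ 2) t := by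
  have h1 : HasDerivAt Real.log t⁻¹ t := Real.hasDerivAt_log ht.ne'
  have h2 : HasDerivAt (fun u : ℝ => u) 1 t := hasDerivAt_id t
  have h := h1.div h2 ht.ne'
  refine h.congr_deriv (Eq.symm ?_)
  field_simp

lemma hasDerivAt_L {t : ℝ} (ht : 1 < t) :
    HasDerivAt (fun u : ℝ => Real.log u - Real.log (Real.log u))
      ((Real.log t - 1) / (t * Real.log t)) t := by
  have ht0 : 0 < t := by linarith
  have hlt : 0 < Real.log t := Real.log_pos ht
  have h1 : HasDerivAt Real.log t⁻¹ t := Real.hasDerivAt_log ht0.ne'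
  have h2 : HasDerivAt (fun u : ℝ => Real.log (Real.log u)) ((Real.log t)⁻¹ * t⁻¹) t :=
    (Real.hasDerivAt_log hlt.ne').comp t h1
  have h := h1.sub h2
  refine h.congr_deriv (Eq.symm ?_)
  rw [div_eq_iff (by positivity : (t * Real.log t) ≠ 0)]
  field_simp

lemma sub_log_atTop : Tendsto (fun y : ℝ => y - Real.log y) atTop atTop := by
  refine tendsto_atTop_mono' atTop ?_
    ((tendsto_id.atTop_div_const (by norm_num : (0:ℝ) < 2)))
  filter_upwards [eventually_ge_atTop (16:ℝ)] with y hy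
  have h0 : (0:ℝ) ≤ y := by linarith
  have hs : Real.log y = 2 * Real.log (Real.sqrt y) := by
    rw [Real.log_sqrt h0]; ring
  have h1 : Real.log (Real.sqrt y) ≤ Real.sqrt y - 1 :=
    Real.log_le_sub_one_of_pos (Real.sqrt_pos.mpr (by linarith))
  have h2 : Real.sqrt y ≤ y / 4 := by
    nlinarith [Real.sq_sqrt h0, Real.sqrt_nonneg y, sq_nonneg (Real.sqrt y - 4)]
  show y / 2 ≤ y - Real.log y
  linarith

lemma abel_key (a : ℕ → ℝ) (x : ℝ) (hx : 1 ≤ x) :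
    (∑ n ∈ Finset.Icc 1 ⌊x⌋₊, a n * Real.log n / n)
      = (Real.log x / x) * (∑ n ∈ Finset.Icc 1 ⌊x⌋₊, a n)
        - ∫ t in Set.Ioc 1 x,
            ((1 - Real.log t) / t ^ 2) * (∑ n ∈ Finset.Icc 1 ⌊t⌋₊, a n) := by
  classical
  set cc : ℕ → ℝ := fun n => if n = 0 then 0 else a n with hccdef
  have hsum : ∀ t : ℝ, ∑ k ∈ Finset.Icc 0 ⌊t⌋₊, cc k = ∑ n ∈ Finset.Icc 1 ⌊t⌋₊, a n := by
    intro t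
    rw [show (1:ℕ) = 0 + 1 from rfl, Finset.Icc_add_one_left_eq_Ioc,
      Finset.Icc_eq_cons_Ioc (Nat.zero_le _), Finset.sum_cons]
    have h0 : cc 0 = 0 := by simp [hccdef]
    rw [h0, zero_add]
    exact Finset.sum_congr rfl fun k hk => by
      have : k ≠ 0 := by
        have := (Finset.mem_Ioc.mp hk).1; omega
      simp [hccdef, this]
  have hcc0 : cc 0 = 0 := by simp [hccdef]
  have hf_diff : ∀ t ∈ Set.Icc (1:ℝ) x, DifferentiableAt ℝ (fun u : ℝ => Real.log u / u) t := by
    intro t ht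
    exact (hasDerivAt_logdiv (by linarith [ht.1] : (0:ℝ) < t)).differentiableAt
  have hderiv : ∀ t : ℝ, 0 < t →
      deriv (fun u : ℝ => Real.log u / u) t = (1 - Real.log t) / t ^ 2 := fun t ht =>
    (hasDerivAt_logdiv ht).deriv
  have hg_cont : ContinuousOn (fun t : ℝ => (1 - Real.log t) / t ^ 2) (Set.Icc 1 x) := by
    intro t ht
    have ht0 : (0:ℝ) < t := by linarith [ht.1]
    exact ((continuousAt_const.sub (Real.continuousAt_log ht0.ne')).div
      ((continuousAt_id.pow 2)) (pow_ne_zero 2 ht0.ne')).continuousWithinAt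
  have hf_int : IntegrableOn (deriv (fun u : ℝ => Real.log u / u)) (Set.Icc 1 x) := by
    refine (hg_cont.integrableOn_Icc).congr_fun ?_ measurableSet_Icc
    intro t ht
    exact (hderiv t (by linarith [ht.1])).symm
  have habel := sum_mul_eq_sub_integral_mul₀ cc hcc0 x hf_diff hf_int
  have hL : ∑ k ∈ Finset.Icc 0 ⌊x⌋₊, Real.log k / k * cc k
      = ∑ n ∈ Finset.Icc 1 ⌊x⌋₊, a n * Real.log n / n := by
    rw [show (1:ℕ) = 0 + 1 from rfl, Finset.Icc_add_one_left_eq_Ioc,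
      Finset.Icc_eq_cons_Ioc (Nat.zero_le _), Finset.sum_cons]
    rw [hcc0, mul_zero, zero_add]
    exact Finset.sum_congr rfl fun k hk => by
      have hk0 : k ≠ 0 := by
        have := (Finset.mem_Ioc.mp hk).1; omega
      simp only [hccdef, if_neg hk0]
      ring
  have hI : ∫ t in Set.Ioc (1:ℝ) x, deriv (fun u : ℝ => Real.log u / u) t
        * (∑ k ∈ Finset.Icc 0 ⌊t⌋₊, cc k)
      = ∫ t in Set.Ioc (1:ℝ) x,
          ((1 - Real.log t) / t ^ 2) * (∑ n ∈ Finset.Icc 1 ⌊t⌋₊, a n) := by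
    refine setIntegral_congr_fun measurableSet_Ioc fun t ht => ?_
    rw [hderiv t (by linarith [ht.1]), hsum]
  rw [hL, hsum, hI] at habel
  exact habel

lemma final_arith {c δ ε Q CT aCT I2 Lx LT : ℝ} (hc : 0 < c) (hδ : 0 < δ)
    (hεδ : ε = 3 * δ) (hLTnn : 0 ≤ LT) (hLge : LT ≤ Lx) (hcLx : 0 < c * Lx)
    (hp1 : -(δ * c) < Q - c) (hp2 : Q - c < δ * c)
    (hCT1 : CT ≤ aCT) (hCT2 : -aCT ≤ CT)
    (hI2low : (1 - δ) * c * (Lx - LT) ≤ I2) (hI2up : I2 ≤ (1 + δ) * c * (Lx - LT))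
    (hK : c * (1 + δ) + aCT + c * LT ≤ c * Lx * δ) :
    |Q + (CT + I2) - c * Lx| < ε * (c * Lx) := by
  have hpos : 0 < δ * (c * Lx) := by positivity
  have h1 : 0 ≤ δ * c * LT := by positivity
  have h2 : 0 ≤ c * LT := by positivity
  rw [abs_lt]
  constructor <;> nlinarith

set_option maxHeartbeats 1000000 in
/-- Let `(a_n)`, `(b_n)` be nonnegative sequences with `a_n ≤ b_n`.
If `∑_{n ≤ x} b_n ∼ x/log x` and `(∑_{n ≤ x} a_n)/(∑_{n ≤ x} b_n) → c > 0`, then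
`∑_{n ≤ x} a_n·(log n)/n ∼ c·(log x − log log x)` as `x → ∞`. -/
theorem stmt_4 (a b : ℕ → ℝ) (ha : ∀ n, 0 ≤ a n) (hb : ∀ n, 0 ≤ b n)
    (hab : ∀ n, a n ≤ b n) (c : ℝ) (hc : 0 < c)
    (hB : Tendsto (fun x : ℝ =>
        (∑ n ∈ Finset.Icc 1 ⌊x⌋₊, b n) / (x / Real.log x)) atTop (nhds 1))
    (hratio : Tendsto (fun x : ℝ =>
        (∑ n ∈ Finset.Icc 1 ⌊x⌋₊, a n) / (∑ n ∈ Finset.Icc 1 ⌊x⌋₊, b n))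
      atTop (nhds c)) :
    Tendsto (fun x : ℝ =>
        (∑ n ∈ Finset.Icc 1 ⌊x⌋₊, a n * Real.log n / n)
          / (c * (Real.log x - Real.log (Real.log x)))) atTop (nhds 1) := by
  classical
  have e2 : (2:ℝ) ≤ Real.exp 1 := by have := Real.add_one_le_exp 1; linarith
  set A : ℝ → ℝ := fun t => ∑ n ∈ Finset.Icc 1 ⌊t⌋₊, a n with hAdef
  have hAmono : Monotone A := by
    intro s t hst
    exact Finset.sum_le_sum_of_subset_of_nonneg
      (Finset.Icc_subset_Icc le_rfl (Nat.floor_le_floor hst)) (fun i _ _ => ha i)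
  have hAmeas : Measurable A := hAmono.measurable
  have hAnonneg : ∀ t, 0 ≤ A t := fun t => Finset.sum_nonneg fun i _ => ha i
  -- deduce A x / (x / log x) → c
  have hA : Tendsto (fun x : ℝ => A x / (x / Real.log x)) atTop (nhds c) := by
    have hBpos : ∀ᶠ x : ℝ in atTop, 0 < ∑ n ∈ Finset.Icc 1 ⌊x⌋₊, b n := by
      have h1 : ∀ᶠ x : ℝ in atTop,
          (1:ℝ)/2 < (∑ n ∈ Finset.Icc 1 ⌊x⌋₊, b n) / (x / Real.log x) :=
        hB.eventually (eventually_gt_nhds (by norm_num))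
      filter_upwards [h1, eventually_ge_atTop (3:ℝ)] with x hx h3
      have hx0 : 0 < x / Real.log x := div_pos (by linarith) (Real.log_pos (by linarith))
      by_contra h
      push_neg at h
      have : (∑ n ∈ Finset.Icc 1 ⌊x⌋₊, b n) / (x / Real.log x) ≤ 0 :=
        div_nonpos_of_nonpos_of_nonneg h hx0.le
      linarith
    have heq : ∀ᶠ x : ℝ in atTop,
        ((∑ n ∈ Finset.Icc 1 ⌊x⌋₊, a n) / (∑ n ∈ Finset.Icc 1 ⌊x⌋₊, b n))
          * ((∑ n ∈ Finset.Icc 1 ⌊x⌋₊, b n) / (x / Real.log x))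
          = A x / (x / Real.log x) := by
      filter_upwards [hBpos] with x hx
      rw [div_mul_div_comm, mul_comm (∑ n ∈ Finset.Icc 1 ⌊x⌋₊, a n) _,
        mul_div_mul_left _ _ hx.ne']
    have h := (hratio.mul hB).congr' heq
    simpa using h
  have hLinf : Tendsto (fun x : ℝ => c * (Real.log x - Real.log (Real.log x))) atTop atTop := by
    have h := sub_log_atTop.comp Real.tendsto_log_atTop
    have h2 : Tendsto (fun x : ℝ => Real.log x - Real.log (Real.log x)) atTop atTop := h
    exact Tendsto.const_mul_atTop hc h2
  rw [Metric.tendsto_nhds]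
  intro ε hε
  set δ := ε / 3 with hδdef
  have hδ : 0 < δ := by positivity
  have hev : ∀ᶠ t : ℝ in atTop, |A t / (t / Real.log t) - c| < δ * c := by
    have := Metric.tendsto_nhds.mp hA (δ * c) (by positivity)
    simpa [Real.dist_eq] using this
  obtain ⟨T₀, hT₀⟩ := eventually_atTop.mp hev
  set T := max T₀ (Real.exp 1) with hTdef
  have hTe : Real.exp 1 ≤ T := le_max_right _ _
  have hT1 : (1:ℝ) < T := by linarith
  have hTlog : 1 ≤ Real.log T := (Real.le_log_iff_exp_le (by linarith)).mpr hTe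
  have hLTnn : 0 ≤ Real.log T - Real.log (Real.log T) := by
    have h := Real.log_le_sub_one_of_pos (by linarith : (0:ℝ) < Real.log T)
    linarith
  set CT := ∫ t in Set.Ioc (1:ℝ) T, ((Real.log t - 1) / t ^ 2) * A t with hCTdef
  set K := c * (1 + δ) + |CT| + c * (Real.log T - Real.log (Real.log T)) with hKdef
  filter_upwards [eventually_ge_atTop T,
    hLinf.eventually_ge_atTop (K / δ),
    hLinf.eventually_ge_atTop 1] with x hxT hxK hx1
  have hx1' : (1:ℝ) ≤ x := by linarith
  set Lx := Real.log x - Real.log (Real.log x) with hLxdef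
  set LT := Real.log T - Real.log (Real.log T) with hLTdef
  have hcLx : (0:ℝ) < c * Lx := by linarith
  -- Abel summation
  have hS := abel_key a x hx1'
  have hflip : (∫ t in Set.Ioc (1:ℝ) x, ((1 - Real.log t) / t ^ 2) * A t)
      = - ∫ t in Set.Ioc (1:ℝ) x, ((Real.log t - 1) / t ^ 2) * A t := by
    rw [← integral_neg]
    exact integral_congr_ae (Filter.Eventually.of_forall fun t => by ring)
  rw [hflip] at hS
  -- integrability of the integrand on [1, x]
  have hw_cont : ContinuousOn (fun t : ℝ => (Real.log t - 1) / t ^ 2) (Set.Icc 1 x) := by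
    intro t ht
    have ht0 : (0:ℝ) < t := by linarith [ht.1]
    exact (((Real.continuousAt_log ht0.ne').sub continuousAt_const).div
      (continuousAt_id.pow 2) (pow_ne_zero 2 ht0.ne')).continuousWithinAt
  have hwA_int : IntegrableOn (fun t => (Real.log t - 1) / t ^ 2 * A t) (Set.Icc 1 x) := by
    have h1 : IntegrableOn (fun t => A t * ((Real.log t - 1) / t ^ 2)) (Set.Icc 1 x) := by
      refine Integrable.bdd_mul (c := A x) hw_cont.integrableOn_Icc
        (hAmeas.aestronglyMeasurable.restrict) ?_
      refine (ae_restrict_iff' measurableSet_Icc).mpr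
        (Filter.Eventually.of_forall fun t ht => ?_)
      rw [Real.norm_eq_abs, abs_of_nonneg (hAnonneg t)]
      exact hAmono ht.2
    exact h1.congr (Filter.Eventually.of_forall fun t => mul_comm _ _)
  -- split the integral at T
  have hI1 : IntervalIntegrable (fun t => (Real.log t - 1) / t ^ 2 * A t) volume 1 T :=
    (intervalIntegrable_iff_integrableOn_Icc_of_le hT1.le).mpr
      (hwA_int.mono_set (Set.Icc_subset_Icc le_rfl hxT))
  have hI2' : IntervalIntegrable (fun t => (Real.log t - 1) / t ^ 2 * A t) volume T x :=
    (intervalIntegrable_iff_integrableOn_Icc_of_le hxT).mpr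
      (hwA_int.mono_set (Set.Icc_subset_Icc hT1.le le_rfl))
  have hsplit : (∫ t in Set.Ioc (1:ℝ) x, (Real.log t - 1) / t ^ 2 * A t)
      = CT + ∫ t in Set.Ioc T x, (Real.log t - 1) / t ^ 2 * A t := by
    rw [hCTdef, ← intervalIntegral.integral_of_le hx1',
      ← intervalIntegral.integral_of_le hT1.le, ← intervalIntegral.integral_of_le hxT,
      intervalIntegral.integral_add_adjacent_intervals hI1 hI2']
  -- pointwise bounds on (T, x]
  have hbound : ∀ t ∈ Set.Ioc T x,
      ((1 - δ) * c) * ((Real.log t - 1) / (t * Real.log t))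
        ≤ (Real.log t - 1) / t ^ 2 * A t
      ∧ (Real.log t - 1) / t ^ 2 * A t
        ≤ ((1 + δ) * c) * ((Real.log t - 1) / (t * Real.log t)) := by
    intro t ht
    have hte : Real.exp 1 ≤ t := le_trans hTe ht.1.le
    have ht0 : (0:ℝ) < t := lt_of_lt_of_le (Real.exp_pos 1) hte
    have hlt : 1 ≤ Real.log t := (Real.le_log_iff_exp_le ht0).mpr hte
    have hQ := hT₀ t (le_trans (le_max_left _ _) ht.1.le)
    have hD : 0 < t / Real.log t := div_pos ht0 (by linarith)
    have hAt : A t = (A t / (t / Real.log t)) * (t / Real.log t) :=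
      (div_mul_cancel₀ _ hD.ne').symm
    obtain ⟨hq1, hq2⟩ := abs_lt.mp hQ
    have hlow : (1 - δ) * c * (t / Real.log t) ≤ A t := by
      rw [hAt]; nlinarith
    have hup : A t ≤ (1 + δ) * c * (t / Real.log t) := by
      rw [hAt]; nlinarith
    have hw0 : (0:ℝ) ≤ (Real.log t - 1) / t ^ 2 :=
      div_nonneg (by linarith) (by positivity)
    have hkey : (t / Real.log t) * ((Real.log t - 1) / t ^ 2)
        = (Real.log t - 1) / (t * Real.log t) := by
      field_simp
    constructor
    · calc ((1 - δ) * c) * ((Real.log t - 1) / (t * Real.log t))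
          = ((1 - δ) * c * (t / Real.log t)) * ((Real.log t - 1) / t ^ 2) := by
            rw [← hkey]; ring
        _ ≤ A t * ((Real.log t - 1) / t ^ 2) := mul_le_mul_of_nonneg_right hlow hw0
        _ = (Real.log t - 1) / t ^ 2 * A t := mul_comm _ _
    · calc (Real.log t - 1) / t ^ 2 * A t
          = A t * ((Real.log t - 1) / t ^ 2) := mul_comm _ _
        _ ≤ ((1 + δ) * c * (t / Real.log t)) * ((Real.log t - 1) / t ^ 2) :=
            mul_le_mul_of_nonneg_right hup hw0
        _ = ((1 + δ) * c) * ((Real.log t - 1) / (t * Real.log t)) := by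
            rw [← hkey]; ring
  -- FTC for the comparison integral
  have hψ_cont : ContinuousOn (fun t : ℝ => (Real.log t - 1) / (t * Real.log t))
      (Set.Icc T x) := by
    intro t ht
    have ht1 : (1:ℝ) < t := lt_of_lt_of_le hT1 ht.1
    have ht0 : (0:ℝ) < t := by linarith
    have hlt : 0 < Real.log t := Real.log_pos ht1
    have hne : t * Real.log t ≠ 0 := mul_ne_zero ht0.ne' hlt.ne'
    have hc1 : ContinuousAt (fun u : ℝ => Real.log u - 1) t :=
      (Real.continuousAt_log ht0.ne').sub continuousAt_const
    have hc2 : ContinuousAt (fun u : ℝ => u * Real.log u) t :=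
      continuousAt_id.mul (Real.continuousAt_log ht0.ne')
    exact (hc1.div hc2 hne).continuousWithinAt
  have hFTC : (∫ t in Set.Ioc T x, (Real.log t - 1) / (t * Real.log t)) = Lx - LT := by
    rw [← intervalIntegral.integral_of_le hxT]
    have := intervalIntegral.integral_eq_sub_of_hasDerivAt
      (f := fun u : ℝ => Real.log u - Real.log (Real.log u))
      (a := T) (b := x)
      (fun t ht => by
        rw [Set.uIcc_of_le hxT] at ht
        exact hasDerivAt_L (lt_of_lt_of_le hT1 ht.1))
      (by
        apply ContinuousOn.intervalIntegrable
        rwa [Set.uIcc_of_le hxT])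
    rw [this]
  have hψ_int : IntegrableOn (fun t : ℝ => (Real.log t - 1) / (t * Real.log t))
      (Set.Ioc T x) := (hψ_cont.integrableOn_Icc).mono_set Set.Ioc_subset_Icc_self
  have hwA_int2 : IntegrableOn (fun t => (Real.log t - 1) / t ^ 2 * A t) (Set.Ioc T x) :=
    hwA_int.mono_set (le_trans Set.Ioc_subset_Icc_self (Set.Icc_subset_Icc hT1.le le_rfl))
  -- integral bounds
  have hI2low : ((1 - δ) * c) * (Lx - LT)
      ≤ ∫ t in Set.Ioc T x, (Real.log t - 1) / t ^ 2 * A t := by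
    have h := setIntegral_mono_on (hψ_int.const_mul ((1 - δ) * c)) hwA_int2
      measurableSet_Ioc (fun t ht => (hbound t ht).1)
    rwa [MeasureTheory.integral_const_mul, hFTC] at h
  have hI2up : (∫ t in Set.Ioc T x, (Real.log t - 1) / t ^ 2 * A t)
      ≤ ((1 + δ) * c) * (Lx - LT) := by
    have h := setIntegral_mono_on hwA_int2 (hψ_int.const_mul ((1 + δ) * c))
      measurableSet_Ioc (fun t ht => (hbound t ht).2)
    rwa [MeasureTheory.integral_const_mul, hFTC] at h
  have hLge : LT ≤ Lx := by
    have h0 : (0:ℝ) ≤ ∫ t in Set.Ioc T x, (Real.log t - 1) / (t * Real.log t) := by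
      refine setIntegral_nonneg measurableSet_Ioc fun t ht => ?_
      have hte : Real.exp 1 ≤ t := le_trans hTe ht.1.le
      have ht0 : (0:ℝ) < t := lt_of_lt_of_le (Real.exp_pos 1) hte
      have hlt : 1 ≤ Real.log t := (Real.le_log_iff_exp_le ht0).mpr hte
      exact div_nonneg (by linarith) (by positivity)
    rw [hFTC] at h0; linarith
  -- bound on the boundary term
  have hPx := hT₀ x (le_trans (le_max_left _ _) hxT)
  obtain ⟨hp1, hp2⟩ := abs_lt.mp hPx
  have hP : (Real.log x / x) * A x = A x / (x / Real.log x) := by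
    rw [div_div_eq_mul_div]; ring
  rw [hP, hsplit] at hS
  -- final assembly
  set Q := A x / (x / Real.log x) with hQdef
  set I2 := ∫ t in Set.Ioc T x, (Real.log t - 1) / t ^ 2 * A t with hI2def
  set S := ∑ n ∈ Finset.Icc 1 ⌊x⌋₊, a n * Real.log n / n with hSdef
  have hK : c * (1 + δ) + |CT| + c * LT ≤ c * Lx * δ := by
    have h := (div_le_iff₀ hδ).mp hxK
    rw [hKdef] at h
    exact h
  have hεδ : ε = 3 * δ := by rw [hδdef]; ring
  rw [Real.dist_eq]
  have hdiv : S / (c * Lx) - 1 = (S - c * Lx) / (c * Lx) := div_sub_one hcLx.ne'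
  rw [hdiv, abs_div, abs_of_pos hcLx, div_lt_iff₀ hcLx, hS]
  have heq : Q - -(CT + I2) - c * Lx = Q + (CT + I2) - c * Lx := by ring
  rw [heq]
  exact final_arith hc hδ hεδ hLTnn hLge hcLx hp1 hp2 (le_abs_self CT) (neg_abs_le CT)
    hI2low hI2up hK
end
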